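/- Let E₁, E₂, F be Banach spaces, U ⊆ E₁ and V ⊆ E₂ open sets, and f : U × V → F a map which is C¹ (continuously Fréchet differentiable). Fix w ∈ E₁ and v ∈ E₂. If the iterated directional derivative D_{(w,0)} D_{(0,v)} f exists at every point of U × V and is continuous as a map U × V → F, then the iterated directional derivative D_{(0,v)} D_{(w,0)} f also exists everywhere and coincides with D_{(w,0)} D_{(0,v)} f. -/

import Mathlib

open MeasureTheory intervalIntegral Set Filter Topology

/-- Helper: absolute value bound for points of `uIcc 0 r`. -/
private lemma abs_le_of_mem_uIcc_zero {s r : ℝ} (hs : s ∈ Set.uIcc (0:ℝ) r) : |s| ≤ |r| := by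
  rw [Set.mem_uIcc] at hs
  rcases hs with ⟨h1, h2⟩ | ⟨h1, h2⟩
  · exact (abs_le.2 ⟨by linarith [abs_nonneg r], h2.trans (le_abs_self r)⟩)
  · exact (abs_le.2 ⟨by linarith [neg_abs_le r], by linarith [abs_nonneg r]⟩)

/-- If `f : U × V → F` is `C¹` and the iterated directional derivative
`D_{(w,0)} D_{(0,v)} f` exists at every point of `U × V` and is continuous
there, then `D_{(0,v)} D_{(w,0)} f` also exists everywhere on `U × V` and
coincides with `D_{(w,0)} D_{(0,v)} f`. -/
theorem stmt4
    {E₁ E₂ F : Type*} [NormedAddCommGroup E₁] [NormedSpace ℝ E₁]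
    [NormedAddCommGroup E₂] [NormedSpace ℝ E₂]
    [NormedAddCommGroup F] [NormedSpace ℝ F] [CompleteSpace F]
    {U : Set E₁} {V : Set E₂} (hU : IsOpen U) (hV : IsOpen V)
    (f : E₁ × E₂ → F) (hf : ContDiffOn ℝ 1 f (U ×ˢ V))
    (w : E₁) (v : E₂) (h : E₁ × E₂ → F)
    (hexists : ∀ p ∈ U ×ˢ V,
      HasLineDerivAt ℝ (fun q => lineDeriv ℝ f q ((0 : E₁), v)) (h p) p
        (w, (0 : E₂)))
    (hcont : ContinuousOn h (U ×ˢ V)) :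
    ∀ p ∈ U ×ˢ V,
      HasLineDerivAt ℝ (fun q => lineDeriv ℝ f q (w, (0 : E₂))) (h p) p
        ((0 : E₁), v) := by
  rintro ⟨x, y⟩ hp
  obtain ⟨hx, hy⟩ := hp
  have hUV : IsOpen (U ×ˢ V) := hU.prod hV
  have hdiff : ∀ P ∈ U ×ˢ V, DifferentiableAt ℝ f P :=
    fun P hP => (hf.differentiableOn one_ne_zero).differentiableAt (hUV.mem_nhds hP)
  set c : ℝ → ℝ → E₁ × E₂ := fun u τ => (x + u • w, y + τ • v) with hc
  -- choose ε > 0 such that c u τ ∈ U ×ˢ V whenever |u| ≤ ε and |τ| ≤ ε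
  obtain ⟨ε₁, hε₁, hS⟩ : ∃ ε > (0:ℝ), ∀ u : ℝ, |u| ≤ ε → x + u • w ∈ U := by
    have hopen : IsOpen ((fun u : ℝ => x + u • w) ⁻¹' U) :=
      (by fun_prop : Continuous fun u : ℝ => x + u • w).isOpen_preimage U hU
    have h0 : (0:ℝ) ∈ (fun u : ℝ => x + u • w) ⁻¹' U := by simp [hx]
    obtain ⟨δ, hδ, hball⟩ := Metric.isOpen_iff.1 hopen 0 h0
    exact ⟨δ/2, by linarith, fun u hu => hball (by
      simp only [Metric.mem_ball, Real.dist_eq, sub_zero]; linarith)⟩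
  obtain ⟨ε₂, hε₂, hT⟩ : ∃ ε > (0:ℝ), ∀ τ : ℝ, |τ| ≤ ε → y + τ • v ∈ V := by
    have hopen : IsOpen ((fun τ : ℝ => y + τ • v) ⁻¹' V) :=
      (by fun_prop : Continuous fun τ : ℝ => y + τ • v).isOpen_preimage V hV
    have h0 : (0:ℝ) ∈ (fun τ : ℝ => y + τ • v) ⁻¹' V := by simp [hy]
    obtain ⟨δ, hδ, hball⟩ := Metric.isOpen_iff.1 hopen 0 h0
    exact ⟨δ/2, by linarith, fun u hu => hball (by
      simp only [Metric.mem_ball, Real.dist_eq, sub_zero]; linarith)⟩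
  set ε : ℝ := min ε₁ ε₂ with hεdef
  have hε : 0 < ε := lt_min hε₁ hε₂
  have hmem : ∀ u τ : ℝ, |u| ≤ ε → |τ| ≤ ε → c u τ ∈ U ×ˢ V := fun u τ hu hτ =>
    ⟨hS u (hu.trans (min_le_left _ _)), hT τ (hτ.trans (min_le_right _ _))⟩
  set q : ℝ → ℝ → F := fun u τ => fderiv ℝ f (c u τ) ((0 : E₁), v) with hq
  set r : ℝ → ℝ → F := fun u τ => fderiv ℝ f (c u τ) (w, (0 : E₂)) with hr
  set hh : ℝ → ℝ → F := fun u τ => h (c u τ) with hhh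
  -- derivative of f along τ
  have F1 : ∀ u τ : ℝ, |u| ≤ ε → |τ| ≤ ε →
      HasDerivAt (fun τ' => f (c u τ')) (q u τ) τ := by
    intro u τ hu hτ
    have hcurve : HasDerivAt (fun τ' : ℝ => c u τ') ((0 : E₁), v) τ := by
      have h2 : HasDerivAt (fun τ' : ℝ => y + τ' • v) v τ := by
        simpa using (((hasDerivAt_id τ).smul_const v).const_add y)
      exact (hasDerivAt_const τ (x + u • w)).prodMk h2
    exact ((hdiff _ (hmem u τ hu hτ)).hasFDerivAt).comp_hasDerivAt τ hcurve
  -- derivative of f along u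
  have F2 : ∀ u τ : ℝ, |u| ≤ ε → |τ| ≤ ε →
      HasDerivAt (fun u' => f (c u' τ)) (r u τ) u := by
    intro u τ hu hτ
    have hcurve : HasDerivAt (fun u' : ℝ => c u' τ) (w, (0 : E₂)) u := by
      have h1 : HasDerivAt (fun u' : ℝ => x + u' • w) w u := by
        simpa using (((hasDerivAt_id u).smul_const w).const_add x)
      exact h1.prodMk (hasDerivAt_const u (y + τ • v))
    exact ((hdiff _ (hmem u τ hu hτ)).hasFDerivAt).comp_hasDerivAt u hcurve
  -- derivative of q along u is hh
  have F3 : ∀ u τ : ℝ, |u| ≤ ε → |τ| ≤ ε →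
      HasDerivAt (fun u' => q u' τ) (hh u τ) u := by
    intro u τ hu hτ
    set P : E₁ × E₂ := c u τ with hP
    have hPmem : P ∈ U ×ˢ V := hmem u τ hu hτ
    have hev : (fun q' => lineDeriv ℝ f q' ((0 : E₁), v)) =ᶠ[nhds P]
        (fun q' => fderiv ℝ f q' ((0 : E₁), v)) :=
      Filter.eventuallyEq_of_mem (hUV.mem_nhds hPmem)
        (fun q' hq' => (hdiff q' hq').lineDeriv_eq_fderiv)
    have hl : HasLineDerivAt ℝ (fun q' => fderiv ℝ f q' ((0 : E₁), v)) (h P) P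
        (w, (0 : E₂)) := hev.hasLineDerivAt_iff.1 (hexists P hPmem)
    have hl2 : HasDerivAt
        (fun s : ℝ => fderiv ℝ f (P + s • (w, (0 : E₂))) ((0 : E₁), v)) (h P) 0 := hl
    have hinner : HasDerivAt (fun u' : ℝ => u' - u) 1 u := (hasDerivAt_id u).sub_const u
    have hshift := HasDerivAt.scomp_of_eq (hg := hl2) (hh := hinner) (hy := (sub_self u).symm)
    have hfun : ((fun s : ℝ => fderiv ℝ f (P + s • (w, (0 : E₂))) ((0 : E₁), v)) ∘
        (fun u' : ℝ => u' - u)) = fun u' => q u' τ := by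
      funext u'
      have : P + (u' - u) • (w, (0 : E₂)) = c u' τ := by
        rw [hP, hc, Prod.ext_iff]
        constructor
        · show x + u • w + (u' - u) • w = x + u' • w
          rw [sub_smul]; abel
        · show y + τ • v + (u' - u) • (0 : E₂) = y + τ • v
          rw [smul_zero, add_zero]
      simp only [Function.comp_apply, this, hq]
    rw [hfun] at hshift
    simpa using hshift
  -- continuity facts
  have hfderiv_cont : ContinuousOn (fun P => fderiv ℝ f P) (U ×ˢ V) :=
    hf.continuousOn_fderiv_of_isOpen hUV le_rfl
  have hccont : ∀ τ : ℝ, Continuous (fun u : ℝ => c u τ) := by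
    intro τ; fun_prop
  have hccont' : ∀ u : ℝ, Continuous (fun τ : ℝ => c u τ) := by
    intro u; fun_prop
  have hqcont : ∀ u : ℝ, |u| ≤ ε → ContinuousOn (fun τ => q u τ) (Set.Icc (-ε) ε) := by
    intro u hu
    apply ContinuousOn.clm_apply
    · exact hfderiv_cont.comp (hccont' u).continuousOn
        (fun τ hτ => hmem u τ hu (abs_le.2 ⟨hτ.1, hτ.2⟩))
    · exact continuousOn_const
  have hhcontu : ∀ τ : ℝ, |τ| ≤ ε → ContinuousOn (fun u => hh u τ) (Set.Icc (-ε) ε) := by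
    intro τ hτ
    exact hcont.comp (hccont τ).continuousOn
      (fun u hu => hmem u τ (abs_le.2 ⟨hu.1, hu.2⟩) hτ)
  have hhcontτ : ContinuousOn (fun τ => hh 0 τ) (Set.Icc (-ε) ε) :=
    hcont.comp (hccont' 0).continuousOn
      (fun τ hτ => hmem 0 τ (by simp [hε.le]) (abs_le.2 ⟨hτ.1, hτ.2⟩))
  have hsub : ∀ {t : ℝ}, |t| ≤ ε → Set.uIcc (0:ℝ) t ⊆ Set.Icc (-ε) ε := by
    intro t ht
    have : Set.uIcc (-ε) ε = Set.Icc (-ε) ε := Set.uIcc_of_le (by linarith)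
    rw [← this]
    exact Set.uIcc_subset_uIcc (by rw [Set.mem_uIcc]; left; constructor <;> linarith)
      (by rw [this]; exact ⟨neg_le_of_abs_le ht, le_of_abs_le ht⟩)
  -- integrability
  have intq : ∀ u t : ℝ, |u| ≤ ε → |t| ≤ ε →
      IntervalIntegrable (fun τ => q u τ) volume 0 t := fun u t hu ht =>
    ((hqcont u hu).mono (hsub ht)).intervalIntegrable
  have inth : ∀ τ σ : ℝ, |τ| ≤ ε → |σ| ≤ ε →
      IntervalIntegrable (fun u => hh u τ) volume 0 σ := fun τ σ hτ hσ =>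
    ((hhcontu τ hτ).mono (hsub hσ)).intervalIntegrable
  have inth0 : ∀ t : ℝ, |t| ≤ ε →
      IntervalIntegrable (fun τ => hh 0 τ) volume 0 t := fun t ht =>
    (hhcontτ.mono (hsub ht)).intervalIntegrable
  -- fundamental theorem of calculus
  have FTC1 : ∀ u t : ℝ, |u| ≤ ε → |t| ≤ ε →
      (∫ τ in (0:ℝ)..t, q u τ) = f (c u t) - f (c u 0) := by
    intro u t hu ht
    exact integral_eq_sub_of_hasDerivAt
      (fun τ hτ => F1 u τ hu ((abs_le_of_mem_uIcc_zero hτ).trans ht)) (intq u t hu ht)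
  have FTC2 : ∀ τ σ : ℝ, |τ| ≤ ε → |σ| ≤ ε →
      (∫ u in (0:ℝ)..σ, hh u τ) = q σ τ - q 0 τ := by
    intro τ σ hτ hσ
    exact integral_eq_sub_of_hasDerivAt
      (fun u hu => F3 u τ ((abs_le_of_mem_uIcc_zero hu).trans hσ) hτ) (inth τ σ hτ hσ)
  -- uniform continuity of hh on the square
  have hQcomp : IsCompact ((Set.Icc (-ε) ε) ×ˢ (Set.Icc (-ε) ε)) :=
    isCompact_Icc.prod isCompact_Icc
  have hhQ : ContinuousOn (fun z : ℝ × ℝ => h (c z.1 z.2))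
      ((Set.Icc (-ε) ε) ×ˢ (Set.Icc (-ε) ε)) := by
    apply hcont.comp
    · exact (by fun_prop : Continuous fun z : ℝ × ℝ => c z.1 z.2).continuousOn
    · rintro ⟨u, τ⟩ ⟨hu, hτ⟩
      exact hmem u τ (abs_le.2 ⟨hu.1, hu.2⟩) (abs_le.2 ⟨hτ.1, hτ.2⟩)
  have hucont := hQcomp.uniformContinuousOn_of_continuous hhQ
  -- the key identity
  have key : ∀ t : ℝ, |t| ≤ ε → r 0 t - r 0 0 = ∫ τ in (0:ℝ)..t, hh 0 τ := by
    intro t ht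
    have h0ε : |(0:ℝ)| ≤ ε := by simp [hε.le]
    have hK : HasDerivAt (fun σ => f (c σ t) - f (c σ 0)) (r 0 t - r 0 0) 0 :=
      (F2 0 t h0ε ht).sub (F2 0 0 h0ε h0ε)
    have T1 : Tendsto (fun σ : ℝ => σ⁻¹ •
        ((f (c σ t) - f (c σ 0)) - (f (c 0 t) - f (c 0 0)))) (𝓝[≠] 0)
        (𝓝 (r 0 t - r 0 0)) := by
      have := hasDerivAt_iff_tendsto_slope.1 hK
      simpa [slope_fun_def, vsub_eq_sub, sub_zero] using this
    have T2 : Tendsto (fun σ : ℝ => σ⁻¹ •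
        ((f (c σ t) - f (c σ 0)) - (f (c 0 t) - f (c 0 0)))) (𝓝[≠] 0)
        (𝓝 (∫ τ in (0:ℝ)..t, hh 0 τ)) := by
      rw [Metric.tendsto_nhdsWithin_nhds]
      intro η hη
      set η' : ℝ := η / (2 * (ε + 1)) with hη'def
      have hη' : 0 < η' := by positivity
      obtain ⟨δ, hδ, hδu⟩ := Metric.uniformContinuousOn_iff.1 hucont η' hη'
      refine ⟨min δ ε, lt_min hδ hε, ?_⟩
      intro σ hσne hσd
      have hσ0 : σ ≠ 0 := hσne
      rw [Real.dist_eq, sub_zero] at hσd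
      have hσδ : |σ| < δ := hσd.trans_le (min_le_left _ _)
      have hσε : |σ| ≤ ε := (hσd.trans_le (min_le_right _ _)).le
      -- rewrite the difference as an integral
      have e2 : (f (c σ t) - f (c σ 0)) - (f (c 0 t) - f (c 0 0))
          = ∫ τ in (0:ℝ)..t, (q σ τ - q 0 τ) := by
        rw [intervalIntegral.integral_sub (intq σ t hσε ht) (intq 0 t h0ε ht), FTC1 σ t hσε ht,
          FTC1 0 t h0ε ht]
      set g : ℝ → F := fun τ => σ⁻¹ • (q σ τ - q 0 τ) - hh 0 τ with hg
      have e3 : σ⁻¹ • ((f (c σ t) - f (c σ 0)) - (f (c 0 t) - f (c 0 0)))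
          - (∫ τ in (0:ℝ)..t, hh 0 τ) = ∫ τ in (0:ℝ)..t, g τ := by
        have i1 : IntervalIntegrable (fun τ => q σ τ - q 0 τ) volume 0 t :=
          (intq σ t hσε ht).sub (intq 0 t h0ε ht)
        have i2 : IntervalIntegrable (fun τ => σ⁻¹ • (q σ τ - q 0 τ)) volume 0 t :=
          i1.smul σ⁻¹
        simp only [hg]
        rw [intervalIntegral.integral_sub i2 (inth0 t ht),
          intervalIntegral.integral_smul, ← e2]
      -- bound g
      have hgbound : ∀ τ ∈ Set.uIoc (0:ℝ) t, ‖g τ‖ ≤ η' := by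
        intro τ hτ
        have hτε : |τ| ≤ ε :=
          (abs_le_of_mem_uIcc_zero (Set.uIoc_subset_uIcc hτ)).trans ht
        have e4 : q σ τ - q 0 τ = ∫ u in (0:ℝ)..σ, hh u τ := (FTC2 τ σ hτε hσε).symm
        have e5 : (∫ u in (0:ℝ)..σ, (hh u τ - hh 0 τ))
            = (q σ τ - q 0 τ) - σ • hh 0 τ := by
          rw [intervalIntegral.integral_sub (inth τ σ hτε hσε) intervalIntegrable_const,
            intervalIntegral.integral_const, e4, sub_zero]
        have hpt : ∀ u ∈ Set.uIoc (0:ℝ) σ, ‖hh u τ - hh 0 τ‖ ≤ η' := by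
          intro u hu
          have huσ : |u| ≤ |σ| := abs_le_of_mem_uIcc_zero (Set.uIoc_subset_uIcc hu)
          have huε : |u| ≤ ε := huσ.trans hσε
          have hd : dist ((u, τ) : ℝ × ℝ) ((0, τ) : ℝ × ℝ) < δ := by
            rw [Prod.dist_eq]
            simp only [Real.dist_eq, sub_zero, sub_self, abs_zero]
            exact lt_of_le_of_lt (by simp) (huσ.trans_lt hσδ)
          have := hδu (u, τ) ⟨⟨neg_le_of_abs_le huε, le_of_abs_le huε⟩,
            ⟨neg_le_of_abs_le hτε, le_of_abs_le hτε⟩⟩ (0, τ)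
            ⟨⟨neg_le_of_abs_le h0ε, le_of_abs_le h0ε⟩,
            ⟨neg_le_of_abs_le hτε, le_of_abs_le hτε⟩⟩ hd
          rw [dist_eq_norm] at this
          exact this.le
        have hnorm : ‖∫ u in (0:ℝ)..σ, (hh u τ - hh 0 τ)‖ ≤ η' * |σ - 0| :=
          intervalIntegral.norm_integral_le_of_norm_le_const hpt
        rw [sub_zero] at hnorm
        have : g τ = σ⁻¹ • ((q σ τ - q 0 τ) - σ • hh 0 τ) := by
          rw [hg, smul_sub, smul_smul, inv_mul_cancel₀ hσ0, one_smul]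
        rw [this, ← e5, norm_smul, norm_inv, Real.norm_eq_abs]
        calc |σ|⁻¹ * ‖∫ u in (0:ℝ)..σ, (hh u τ - hh 0 τ)‖
            ≤ |σ|⁻¹ * (η' * |σ|) := by
              apply mul_le_mul_of_nonneg_left hnorm (by positivity)
          _ = η' := by field_simp
      have hfinal : ‖∫ τ in (0:ℝ)..t, g τ‖ ≤ η' * |t - 0| :=
        intervalIntegral.norm_integral_le_of_norm_le_const hgbound
      rw [dist_eq_norm, e3]
      calc ‖∫ τ in (0:ℝ)..t, g τ‖ ≤ η' * |t - 0| := hfinal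
        _ ≤ η' * ε := by
            apply mul_le_mul_of_nonneg_left _ hη'.le
            rw [sub_zero]; exact ht
        _ < η := by
            rw [hη'def, div_mul_eq_mul_div, div_lt_iff₀ (by positivity)]
            nlinarith
    exact tendsto_nhds_unique T1 T2
  -- conclude
  have h0ε : |(0:ℝ)| ≤ ε := by simp [hε.le]
  have hI : HasDerivAt (fun t => r 0 0 + ∫ τ in (0:ℝ)..t, hh 0 τ) (hh 0 0) 0 := by
    have int00 : IntervalIntegrable (fun τ => hh 0 τ) volume 0 0 := inth0 0 h0ε
    have hmeas : StronglyMeasurableAtFilter (fun τ => hh 0 τ) (𝓝 (0:ℝ)) volume := by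
      have := ContinuousOn.stronglyMeasurableAtFilter (μ := volume)
        isOpen_Ioo (hhcontτ.mono Set.Ioo_subset_Icc_self)
      exact this 0 (by constructor <;> linarith)
    have hcAt : ContinuousAt (fun τ => hh 0 τ) 0 :=
      (hhcontτ.mono Set.Ioo_subset_Icc_self).continuousAt
        (Ioo_mem_nhds (by linarith) hε)
    exact (intervalIntegral.integral_hasDerivAt_right int00 hmeas hcAt).const_add (r 0 0)
  have hp00 : c 0 0 = (x, y) := by simp [hc]
  have hval : hh 0 0 = h (x, y) := by rw [hhh]; simp only [hp00]
  show HasDerivAt (fun t : ℝ => (fun q => lineDeriv ℝ f q (w, (0 : E₂)))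
    ((x, y) + t • ((0 : E₁), v))) (h (x, y)) 0
  rw [← hval]
  apply hI.congr_of_eventuallyEq
  apply Filter.eventuallyEq_of_mem (Ioo_mem_nhds (a := -ε) (by linarith) hε)
  intro t htmem
  have ht : |t| ≤ ε := abs_le.2 ⟨htmem.1.le, htmem.2.le⟩
  show lineDeriv ℝ f ((x, y) + t • ((0 : E₁), v)) (w, (0 : E₂))
      = r 0 0 + ∫ τ in (0:ℝ)..t, hh 0 τ
  have hct : (x, y) + t • ((0 : E₁), v) = c 0 t := by
    simp [hc, Prod.ext_iff]
  have hld : lineDeriv ℝ f ((x, y) + t • ((0 : E₁), v)) (w, (0 : E₂)) = r 0 t := by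
    rw [hct, hr]
    exact (hdiff _ (hmem 0 t h0ε ht)).lineDeriv_eq_fderiv
  rw [hld, ← key t ht]
  abel
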